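/- Let N ≥ 1, L ≥ 2 be integers and let b be an integer. In the additive group (ZMod N)^L (functions Fin L → ZMod N), let u be the constant tuple with every component equal to 1, and let e be the tuple whose j-th component is (b^{j} : ZMod N) for j = 0, …, L−1 (i.e. e j = b^j). Then the subgroup generated by {u, e} is isomorphic, as an additive group, to ZMod N × ZMod (N / Int.gcd (b − 1) N). -/

import Mathlib

/-- When a global `ℤ_N` charge symmetry (tuple `u = (1,…,1)`) and a `ℤ_N` exponential
symmetry of exponent `b` (tuple `e = (1, b, b², …, b^{L−1})`) are embedded in a single
on-site `ℤ_N`, the group of modulated symmetry operators they generate is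
`ℤ_N × ℤ_{N/gcd(b−1,N)}`. -/
theorem charge_exponential_generated_group (N L : ℕ) (hN : 1 ≤ N) (hL : 2 ≤ L)
    (b : ℤ) (u e : Fin L → ZMod N)
    (hu : ∀ j : Fin L, u j = 1)
    (he : ∀ j : Fin L, e j = ((b : ZMod N)) ^ (j : ℕ)) :
    Nonempty ((AddSubgroup.closure {u, e} : AddSubgroup (Fin L → ZMod N)) ≃+
      (ZMod N × ZMod (N / Int.gcd (b - 1) N))) := by
  set d : ℕ := Int.gcd (b - 1) N with hd
  set m : ℕ := N / d with hm
  have hNne : N ≠ 0 := by omega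
  have hdN : (d : ℤ) ∣ (N : ℤ) := Int.gcd_dvd_right (b - 1) N
  have hdN' : d ∣ N := by exact_mod_cast hdN
  have hdne : d ≠ 0 := by
    intro h
    have := Int.gcd_eq_zero_iff.mp h
    exact hNne (by exact_mod_cast this.2)
  have hmd : (m : ℤ) * (d : ℤ) = (N : ℤ) := by
    have : m * d = N := Nat.div_mul_cancel hdN'
    exact_mod_cast this
  set v : Fin L → ZMod N := e - u with hv
  -- divisibility: d ∣ b^j - 1
  have hdvd : ∀ j : ℕ, (d : ℤ) ∣ (b ^ j - 1) := by
    intro j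
    have h1 : (d : ℤ) ∣ (b - 1) := Int.gcd_dvd_left (b - 1) N
    have h2 : (b - 1) ∣ (b ^ j - 1) := by
      simpa using sub_dvd_pow_sub_pow b 1 j
    exact h1.trans h2
  -- torsion of u
  have hu0 : (zmultiplesHom (Fin L → ZMod N) u) (N : ℤ) = 0 := by
    funext j
    simp [hu j, zsmul_eq_mul]
  -- torsion of v
  have hv0 : (zmultiplesHom (Fin L → ZMod N) v) (m : ℤ) = 0 := by
    funext j
    obtain ⟨k, hk⟩ := hdvd (j : ℕ)
    have : (m : ℤ) * (b ^ (j : ℕ) - 1) = (N : ℤ) * k := by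
      rw [hk, ← mul_assoc, hmd]
    show ((m : ℤ) • (e - u)) j = (0 : Fin L → ZMod N) j
    rw [Pi.smul_apply, Pi.sub_apply, Pi.zero_apply, he j, hu j, zsmul_eq_mul]
    have hcast : ((b : ZMod N)) ^ (j : ℕ) - 1 = (((b ^ (j:ℕ) - 1 : ℤ) : ZMod N)) := by
      push_cast; ring
    rw [hcast, ← Int.cast_mul, this, Int.cast_mul, Int.cast_natCast,
      ZMod.natCast_self, zero_mul]
  set f1 : ZMod N →+ (Fin L → ZMod N) :=
    ZMod.lift N ⟨zmultiplesHom (Fin L → ZMod N) u, hu0⟩ with hf1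
  set f2 : ZMod m →+ (Fin L → ZMod N) :=
    ZMod.lift m ⟨zmultiplesHom (Fin L → ZMod N) v, hv0⟩ with hf2
  set f : ZMod N × ZMod m →+ (Fin L → ZMod N) := f1.coprod f2 with hf
  -- apply formulas
  have hf1app : ∀ x : ZMod N, f1 x = ((ZMod.cast x : ℤ)) • u := by
    intro x
    conv_lhs => rw [← ZMod.intCast_zmod_cast x]
    rw [hf1, ZMod.lift_coe]
    rfl
  have hf2app : ∀ y : ZMod m, f2 y = ((ZMod.cast y : ℤ)) • v := by
    intro y
    conv_lhs => rw [← ZMod.intCast_zmod_cast y]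
    rw [hf2, ZMod.lift_coe]
    rfl
  -- injectivity
  have hinj : Function.Injective f := by
    rw [injective_iff_map_eq_zero]
    rintro ⟨x, y⟩ hxy
    have hxy' : f1 x + f2 y = 0 := hxy
    rw [hf1app, hf2app] at hxy'
    set x' : ℤ := (ZMod.cast x : ℤ)
    set y' : ℤ := (ZMod.cast y : ℤ)
    have j0 : Fin L := ⟨0, by omega⟩
    have j1 : Fin L := ⟨1, by omega⟩
    have h0 := congrFun hxy' (⟨0, by omega⟩ : Fin L)
    have h1 := congrFun hxy' (⟨1, by omega⟩ : Fin L)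
    simp only [Pi.add_apply, Pi.smul_apply, Pi.sub_apply, Pi.zero_apply, hv,
      hu, he, Fin.val_mk] at h0 h1
    -- at index 0 : v = 0
    have hx0 : (x' : ZMod N) = 0 := by
      simpa [zsmul_eq_mul] using h0
    have hxeq : x = 0 := by
      rw [← ZMod.intCast_zmod_cast x]; exact hx0
    -- at index 1
    have hy1 : ((y' * (b - 1) : ℤ) : ZMod N) = 0 := by
      have : (x' : ZMod N) • (1 : ZMod N) = 0 := by
        simp [zsmul_eq_mul, hx0]
      push_cast
      rw [mul_sub, mul_one]
      simpa [zsmul_eq_mul, hx0, sub_eq_add_neg, mul_add] using h1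
    have hNdvd : (N : ℤ) ∣ y' * (b - 1) := by
      exact_mod_cast (ZMod.intCast_zmod_eq_zero_iff_dvd _ N).mp hy1
    -- deduce m ∣ y'
    set c : ℤ := (b - 1) / d with hc
    have hbc : (b - 1) = (d : ℤ) * c := (Int.mul_ediv_cancel' (Int.gcd_dvd_left (b - 1) N)).symm
    have hdpos : (0 : ℤ) < d := by exact_mod_cast Nat.pos_of_ne_zero hdne
    have hco : Int.gcd c (m : ℤ) = 1 := by
      have := Int.gcd_div_gcd_div_gcd (i := b - 1) (j := (N : ℤ))
        (by exact_mod_cast Nat.pos_of_ne_zero hdne)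
      have hNd : (N : ℤ) / d = (m : ℤ) := by
        rw [← hmd]
        exact Int.mul_ediv_cancel _ (by exact_mod_cast hdne)
      rwa [← hd, hNd, ← hc] at this
    have hmdvd : (m : ℤ) ∣ y' := by
      have h' : (d : ℤ) * ((m : ℤ)) ∣ (d : ℤ) * (y' * c) := by
        rw [mul_comm (d:ℤ) (m:ℤ), hmd]
        calc (N : ℤ) ∣ y' * (b - 1) := hNdvd
          _ = (d : ℤ) * (y' * c) := by rw [hbc]; ring
      have := (mul_dvd_mul_iff_left (by positivity : (d:ℤ) ≠ 0)).mp h'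
      exact (Int.isCoprime_iff_gcd_eq_one.mpr (by rwa [Int.gcd_comm] at hco)).dvd_of_dvd_mul_right this
    have hyeq : y = 0 := by
      rw [← ZMod.intCast_zmod_cast y]
      exact (ZMod.intCast_zmod_eq_zero_iff_dvd _ m).mpr hmdvd
    simp [hxeq, hyeq, Prod.ext_iff]
  -- range
  have hrange : f.range = AddSubgroup.closure {u, e} := by
    have hcl : AddSubgroup.closure {u, e} = AddSubgroup.closure {u, v} := by
      apply le_antisymm
      · rw [AddSubgroup.closure_le]
        rintro x (h | h)
        · rw [h]; exact AddSubgroup.subset_closure (Or.inl rfl)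
        · rw [h, show e = u + v by rw [hv]; abel]
          exact add_mem (AddSubgroup.subset_closure (Or.inl rfl))
            (AddSubgroup.subset_closure (Or.inr rfl))
      · rw [AddSubgroup.closure_le]
        rintro x (h | h)
        · rw [h]; exact AddSubgroup.subset_closure (Or.inl rfl)
        · rw [h, hv]
          exact sub_mem (AddSubgroup.subset_closure (Or.inr rfl))
            (AddSubgroup.subset_closure (Or.inl rfl))
    rw [hcl]
    have h1r : f1.range = AddSubgroup.zmultiples u := by
      ext w
      constructor
      · rintro ⟨x, rfl⟩
        rw [hf1app]
        exact ⟨_, rfl⟩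
      · rintro ⟨n, rfl⟩
        exact ⟨((n : ZMod N)), by rw [hf1, ZMod.lift_coe]; rfl⟩
    have h2r : f2.range = AddSubgroup.zmultiples v := by
      ext w
      constructor
      · rintro ⟨y, rfl⟩
        rw [hf2app]
        exact ⟨_, rfl⟩
      · rintro ⟨n, rfl⟩
        exact ⟨((n : ZMod m)), by rw [hf2, ZMod.lift_coe]; rfl⟩
    have hfr : f.range = f1.range ⊔ f2.range := by
      ext w
      rw [AddSubgroup.mem_sup]
      constructor
      · rintro ⟨⟨x, y⟩, rfl⟩
        exact ⟨f1 x, ⟨x, rfl⟩, f2 y, ⟨y, rfl⟩, rfl⟩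
      · rintro ⟨_, ⟨x, rfl⟩, _, ⟨y, rfl⟩, rfl⟩
        exact ⟨(x, y), rfl⟩
    rw [hfr, h1r, h2r]
    rw [show ({u, v} : Set (Fin L → ZMod N)) = {u} ∪ {v} by rfl,
      AddSubgroup.closure_union]
    congr 1 <;> rw [AddSubgroup.zmultiples_eq_closure]
  exact ⟨(AddEquiv.addSubgroupCongr hrange.symm).trans (AddMonoidHom.ofInjective hinj).symm⟩
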